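/- Let X = ℝⁿ × D where D is a countable discrete abelian group, and δ a topological automorphism of X with ker(I+δ) = {0}. Let δ̄ be the induced automorphism on the quotient X/(ℝⁿ × b_D), where b_D is the torsion subgroup of D. Then ker(I+δ̄) = {0}. -/

import Mathlib

/-- Let `X = ℝⁿ × D` with `D` countable discrete abelian, and `δ` a
topological automorphism of `X` with `ker (I + δ) = {0}`.  Then the automorphism `δ̄`
induced on the quotient `X / (ℝⁿ × b_D)` (where `b_D` is the torsion subgroup of `D`)
satisfies `ker (I + δ̄) = {0}`; equivalently, `x + δ x ∈ ℝⁿ × b_D` implies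
`x ∈ ℝⁿ × b_D`. -/
theorem induced_automorphism_ker_eq_bot {n : ℕ} {D : Type*} [AddCommGroup D]
    [Countable D] [TopologicalSpace D] [DiscreteTopology D]
    (δ : ((Fin n → ℝ) × D) ≃+ ((Fin n → ℝ) × D))
    (hδ : Continuous δ) (hδ' : Continuous δ.symm)
    (hker : ∀ x : (Fin n → ℝ) × D, x + δ x = 0 → x = 0) :
    ∀ x : (Fin n → ℝ) × D,
      x + δ x ∈ (⊤ : AddSubgroup (Fin n → ℝ)).prod (AddCommGroup.torsion D) →
      x ∈ (⊤ : AddSubgroup (Fin n → ℝ)).prod (AddCommGroup.torsion D) := by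
  intro x hx
  rw [AddSubgroup.mem_prod] at hx ⊢
  refine ⟨trivial, ?_⟩
  obtain ⟨-, htor⟩ := hx
  -- the additive hom g = I + δ
  set g : ((Fin n → ℝ) × D) →+ ((Fin n → ℝ) × D) :=
    (AddMonoidHom.id _) + δ.toAddMonoidHom with hg
  have hgapp : ∀ y, g y = y + δ y := fun y => rfl
  have hginj : Function.Injective g := by
    intro a b hab
    have : a - b = 0 := by
      apply hker
      have : g (a - b) = 0 := by rw [map_sub, hab, sub_self]
      simpa [hgapp] using this
    exact sub_eq_zero.mp this
  -- δ preserves the connected component ℝⁿ × {0}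
  have hcomp : ∀ v : Fin n → ℝ, (δ (v, (0 : D))).2 = 0 := by
    intro v
    have hmem : (v, (0 : D)) ∈ connectedComponent (0 : (Fin n → ℝ) × D) := by
      have hconn : IsPreconnected ((Set.univ : Set (Fin n → ℝ)) ×ˢ ({0} : Set D)) :=
        isPreconnected_univ.prod isPreconnected_singleton
      exact hconn.subset_connectedComponent (by simp) (by simp)
    have h1 : δ (v, (0 : D)) ∈ connectedComponent (δ 0) :=
      (hδ.image_connectedComponent_subset 0) ⟨_, hmem, rfl⟩
    have h2 : (δ (v, (0 : D))).2 ∈ connectedComponent ((δ 0).2) :=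
      (continuous_snd.image_connectedComponent_subset (δ 0)) ⟨_, h1, rfl⟩
    simpa [map_zero δ] using h2
  -- the map f : v ↦ v + (δ (v,0)).1 is an additive, continuous, injective endo of ℝⁿ
  set f : (Fin n → ℝ) →+ (Fin n → ℝ) :=
    { toFun := fun v => (g (v, 0)).1
      map_zero' := by
        show (g (0, 0)).1 = 0
        simp only [Prod.mk_zero_zero, map_zero, Prod.fst_zero]
      map_add' := by
        intro a b
        have : g ((a, (0:D)) + (b, 0)) = g (a, 0) + g (b, 0) := map_add g _ _
        simp only [Prod.mk_add_mk, add_zero] at this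
        simp [this] } with hf
  have hg0 : ∀ v : Fin n → ℝ, g (v, (0:D)) = (f v, 0) := by
    intro v
    ext
    · rfl
    · simp [hgapp, hcomp v]
  have hfc : Continuous f := by
    simp only [hf, AddMonoidHom.coe_mk, ZeroHom.coe_mk, hgapp]
    exact continuous_fst.comp ((continuous_id.prodMk continuous_const).add
      (hδ.comp (continuous_id.prodMk continuous_const)))
  have hfi : Function.Injective f := by
    intro a b hab
    have : g (a, (0:D)) = g (b, 0) := by rw [hg0, hg0, hab]
    exact congrArg Prod.fst (hginj this)
  -- f is ℝ-linear, hence surjective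
  have hfsurj : Function.Surjective f := by
    have := LinearMap.injective_iff_surjective
      (f := (f.toRealLinearMap hfc : (Fin n → ℝ) →ₗ[ℝ] (Fin n → ℝ)))
    have h := this.mp (by simpa [AddMonoidHom.coe_toRealLinearMap] using hfi)
    simpa [AddMonoidHom.coe_toRealLinearMap] using h
  -- kill the torsion
  obtain ⟨m, hm, hms⟩ := isOfFinAddOrder_iff_nsmul_eq_zero.mp htor
  obtain ⟨w, hw⟩ := hfsurj (m • (x + δ x).1)
  have hkey : g (m • x - (w, 0)) = 0 := by
    rw [map_sub, map_nsmul, hg0, hw]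
    have : g x = ((x + δ x).1, (x + δ x).2) := rfl
    rw [this]
    ext
    · simp
    · simpa [smul_add] using hms
  have := hginj (by rw [hkey, map_zero] : g (m • x - (w, 0)) = g 0)
  have hx2 : m • x.2 = 0 := by
    have h2 := congrArg Prod.snd (sub_eq_zero.mp this)
    simpa using h2
  exact isOfFinAddOrder_iff_nsmul_eq_zero.mpr ⟨m, hm, hx2⟩
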